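/- For every k ∈ [0, 4] and all x, y ∈ ℝ³, the inequality (1+|x|²)^{-k/2}·(1+|y|²)^{-2} ≤ C·(1+|x−y|²)^{-k/2}·[(1+|y|²)^{-2} + (1+|y|²)^{-(2−k/2)}·(1+|x|²)^{-k/2}] holds with a constant C depending only on k. -/
import Mathlib

private lemma pow4_le_16 (k : ℝ) (hk0 : 0 ≤ k) (hk4 : k ≤ 4) : (4:ℝ) ^ (k/2) ≤ 16 := by
  have h : (16:ℝ) = (4:ℝ) ^ (2:ℝ) := by
    rw [show (2:ℝ) = ((2:ℕ):ℝ) by norm_num, Real.rpow_natCast]; norm_num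
  rw [h]
  exact Real.rpow_le_rpow_of_exponent_le (by norm_num) (by linarith)

private lemma aux_split (k a b d : ℝ) (hk0 : 0 ≤ k) (hk4 : k ≤ 4) (ha : 1 ≤ a)
    (hb : 1 ≤ b) (hd : 1 ≤ d) (hcase : d ≤ 4*a ∨ d ≤ 4*b) :
    a ^ (-(k/2)) * b ^ (-2:ℝ) ≤
      16 * d ^ (-(k/2)) * (b ^ (-2:ℝ) + b ^ (-(2-k/2)) * a ^ (-(k/2))) := by
  have ha0 : (0:ℝ) < a := lt_of_lt_of_le one_pos ha
  have hb0 : (0:ℝ) < b := lt_of_lt_of_le one_pos hb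
  have hd0 : (0:ℝ) < d := lt_of_lt_of_le one_pos hd
  have h16 : (4:ℝ) ^ (k/2) ≤ 16 := pow4_le_16 k hk0 hk4
  have h4pos : (0:ℝ) < (4:ℝ) ^ (k/2) := Real.rpow_pos_of_pos (by norm_num) _
  set P := a ^ (-(k/2)) with hP
  set Q := b ^ (-2:ℝ) with hQ
  set R := d ^ (-(k/2)) with hR
  have hPpos : 0 < P := Real.rpow_pos_of_pos ha0 _
  have hQpos : 0 < Q := Real.rpow_pos_of_pos hb0 _
  have hRpos : 0 < R := Real.rpow_pos_of_pos hd0 _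
  rcases hcase with h | h
  · -- d ≤ 4a : use first bracket term
    have h1 : (4*a) ^ (-(k/2)) ≤ R :=
      Real.rpow_le_rpow_of_nonpos hd0 h (by linarith)
    have h2 : (4*a) ^ (-(k/2)) = (4:ℝ) ^ (-(k/2)) * P :=
      Real.mul_rpow (by norm_num) ha0.le
    have h3 : (1/16 : ℝ) * P ≤ (4:ℝ) ^ (-(k/2)) * P := by
      apply mul_le_mul_of_nonneg_right _ hPpos.le
      rw [Real.rpow_neg (by norm_num)]
      calc (1/16 : ℝ) = 16⁻¹ := by norm_num
        _ ≤ ((4:ℝ) ^ (k/2))⁻¹ := by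
            exact inv_anti₀ h4pos h16
    have hPR : (1/16 : ℝ) * P ≤ R := by
      calc (1/16:ℝ) * P ≤ (4:ℝ) ^ (-(k/2)) * P := h3
        _ = (4*a) ^ (-(k/2)) := h2.symm
        _ ≤ R := h1
    have hS : 0 ≤ b ^ (-(2-k/2)) * P :=
      mul_nonneg (Real.rpow_nonneg hb0.le _) hPpos.le
    nlinarith [mul_le_mul_of_nonneg_right hPR hQpos.le,
      mul_nonneg (mul_nonneg (by norm_num : (0:ℝ) ≤ 16) hRpos.le) hS]
  · -- d ≤ 4b : use second bracket term
    have hbk : d ^ (k/2) / 16 ≤ b ^ (k/2) := by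
      have h1 : (d/4) ^ (k/2) ≤ b ^ (k/2) :=
        Real.rpow_le_rpow (by positivity) (by linarith) (by positivity)
      have h2 : (d/4) ^ (k/2) = d ^ (k/2) / (4:ℝ) ^ (k/2) :=
        Real.div_rpow hd0.le (by norm_num) (k/2)
      have h3 : d ^ (k/2) / 16 ≤ d ^ (k/2) / (4:ℝ) ^ (k/2) :=
        div_le_div_of_nonneg_left (Real.rpow_nonneg hd0.le _) h4pos h16
      calc d ^ (k/2) / 16 ≤ d ^ (k/2) / (4:ℝ) ^ (k/2) := h3
        _ = (d/4) ^ (k/2) := h2.symm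
        _ ≤ b ^ (k/2) := h1
    have hbsplit : b ^ (-(2-k/2)) = Q * b ^ (k/2) := by
      rw [hQ, ← Real.rpow_add hb0]
      ring_nf
    have hRd : R * d ^ (k/2) = 1 := by
      rw [hR, ← Real.rpow_add hd0]
      simp
    have hdk : 0 < d ^ (k/2) := Real.rpow_pos_of_pos hd0 _
    rw [hbsplit]
    have key : P * Q ≤ 16 * R * (Q * b ^ (k/2) * P) := by
      have h5 : 16 * R * (Q * (d ^ (k/2) / 16) * P) ≤ 16 * R * (Q * b ^ (k/2) * P) := by
        apply mul_le_mul_of_nonneg_left _ (by positivity)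
        apply mul_le_mul_of_nonneg_right _ hPpos.le
        exact mul_le_mul_of_nonneg_left hbk hQpos.le
      have h6 : 16 * R * (Q * (d ^ (k/2) / 16) * P) = (R * d ^ (k/2)) * Q * P := by ring
      calc P * Q = (R * d ^ (k/2)) * Q * P := by rw [hRd]; ring
        _ = 16 * R * (Q * (d ^ (k/2) / 16) * P) := h6.symm
        _ ≤ 16 * R * (Q * b ^ (k/2) * P) := h5
    nlinarith [mul_pos (mul_pos (by norm_num : (0:ℝ) < 16) hRpos) hQpos]

/-- Weight-splitting inequality: for `k ∈ [0,4]` there is `C = C(k)` such that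
`(1+|x|²)^{-k/2}(1+|y|²)^{-2} ≤ C (1+|x−y|²)^{-k/2}[(1+|y|²)^{-2} +
(1+|y|²)^{-(2−k/2)}(1+|x|²)^{-k/2}]` for all `x, y ∈ ℝ³`. -/
theorem stmt4 (k : ℝ) (hk0 : 0 ≤ k) (hk4 : k ≤ 4) :
    ∃ C > 0, ∀ x y : EuclideanSpace ℝ (Fin 3),
      (1 + ‖x‖ ^ 2) ^ (-(k / 2)) * (1 + ‖y‖ ^ 2) ^ (-2 : ℝ)
        ≤ C * (1 + ‖x - y‖ ^ 2) ^ (-(k / 2)) *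
          ((1 + ‖y‖ ^ 2) ^ (-2 : ℝ)
            + (1 + ‖y‖ ^ 2) ^ (-(2 - k / 2)) * (1 + ‖x‖ ^ 2) ^ (-(k / 2))) := by
  refine ⟨16, by norm_num, fun x y => ?_⟩
  have hx : (0:ℝ) ≤ ‖x‖ := norm_nonneg x
  have hy : (0:ℝ) ≤ ‖y‖ := norm_nonneg y
  have htri : ‖x - y‖ ≤ ‖x‖ + ‖y‖ := norm_sub_le x y
  have hcase : 1 + ‖x - y‖ ^ 2 ≤ 4 * (1 + ‖x‖ ^ 2) ∨
      1 + ‖x - y‖ ^ 2 ≤ 4 * (1 + ‖y‖ ^ 2) := by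
    rcases le_total ‖y‖ ‖x‖ with h | h
    · left
      have h2 : ‖x - y‖ ≤ 2 * ‖x‖ := by linarith
      nlinarith [norm_nonneg (x - y)]
    · right
      have h2 : ‖x - y‖ ≤ 2 * ‖y‖ := by linarith
      nlinarith [norm_nonneg (x - y)]
  exact aux_split k (1 + ‖x‖ ^ 2) (1 + ‖y‖ ^ 2) (1 + ‖x - y‖ ^ 2) hk0 hk4
    (by nlinarith) (by nlinarith) (by nlinarith [norm_nonneg (x - y)]) hcase
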